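/- Let G be a group acting continuously on topological spaces E and B, where B is a metric space whose metric d is G-invariant, i.e. d(g·x, g·y) = d(x,y) for all g ∈ G and x, y ∈ B. If an equivariant continuous map p : E → B admits a G-lifting function, then p admits a regular G-lifting function: an equivariant continuous λ : Ω_p → C(I,E) with λ(e,w)(0) = e, p(λ(e,w)(t)) = w(t) for all (e,w) ∈ Ω_p and t ∈ I, and λ(e, c_{p(e)}) = c_e for every e ∈ E, where c_b denotes the constant path at b. -/

import Mathlib

open unitInterval

noncomputable section RegLiftAux

namespace RegLift

variable {B : Type*} [MetricSpace B]

/-- The (truncated) "variation" of a path: `min 1 (dist ω (const (ω 0)))`. -/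
def cfun (ω : C(I, B)) : ℝ := min 1 (dist ω (ContinuousMap.const I (ω 0)))

lemma cfun_nonneg (ω : C(I, B)) : 0 ≤ cfun ω := le_min zero_le_one dist_nonneg

lemma cfun_le_one (ω : C(I, B)) : cfun ω ≤ 1 := min_le_left _ _

lemma continuous_cfun : Continuous (cfun (B := B)) :=
  continuous_const.min (continuous_id.dist
    (ContinuousMap.continuous_const'.comp (ContinuousEvalConst.continuous_eval_const 0)))

lemma dist_const_eq_zero {ω : C(I, B)} (h : cfun ω = 0) :
    dist ω (ContinuousMap.const I (ω 0)) = 0 := by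
  by_contra hne
  have hpos : 0 < dist ω (ContinuousMap.const I (ω 0)) :=
    lt_of_le_of_ne dist_nonneg (Ne.symm hne)
  have : 0 < cfun ω := lt_min one_pos hpos
  linarith [this, h.le]

lemma apply_eq {ω : C(I, B)} (h : cfun ω = 0) (t : I) : ω t = ω 0 := by
  have := eq_of_dist_eq_zero (dist_const_eq_zero h)
  rw [this]; rfl

lemma dist_apply_le (ω : C(I, B)) (t : I) :
    dist (ω t) (ω 0) ≤ dist ω (ContinuousMap.const I (ω 0)) := by
  simpa using ContinuousMap.dist_apply_le_dist (f := ω) (g := ContinuousMap.const I (ω 0)) t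

lemma dist_const_le (a b : B) :
    dist (ContinuousMap.const I a) (ContinuousMap.const I b) ≤ dist a b :=
  (ContinuousMap.dist_le dist_nonneg).2 fun _ => le_rfl

/-- Reparametrization time. -/
def uval (ω : C(I, B)) (s : I) : I :=
  ⟨min 1 ((s : ℝ) / cfun ω),
    le_min zero_le_one (div_nonneg s.2.1 (cfun_nonneg ω)), min_le_left _ _⟩

def tcore : C(I, B) × I → B := fun x => x.1 (uval x.1 x.2)

lemma continuous_tcore : Continuous (tcore (B := B)) := by
  rw [continuous_iff_continuousAt]
  rintro ⟨ω₀, s₀⟩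
  by_cases h : cfun ω₀ = 0
  · rw [Metric.continuousAt_iff]
    intro ε hε
    refine ⟨ε / 4, by positivity, ?_⟩
    rintro ⟨ω, s⟩ hx
    have hω : dist ω ω₀ < ε / 4 := by
      calc dist ω ω₀ ≤ dist (ω, s) (ω₀, s₀) := by
            rw [Prod.dist_eq]; exact le_max_left _ _
        _ < ε / 4 := hx
    have h1 : dist (tcore (ω, s)) (ω 0) ≤ dist ω (ContinuousMap.const I (ω 0)) :=
      dist_apply_le ω _
    have h2 : dist ω (ContinuousMap.const I (ω 0)) ≤
        dist ω ω₀ + dist ω₀ (ContinuousMap.const I (ω₀ 0)) +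
          dist (ContinuousMap.const I (ω₀ 0)) (ContinuousMap.const I (ω 0)) :=
      dist_triangle4 _ _ _ _
    have h3 : dist ω₀ (ContinuousMap.const I (ω₀ 0)) = 0 := dist_const_eq_zero h
    have h4 : dist (ContinuousMap.const I (ω₀ 0)) (ContinuousMap.const I (ω 0)) ≤ dist ω ω₀ := by
      refine (dist_const_le _ _).trans ?_
      rw [dist_comm]
      exact ContinuousMap.dist_apply_le_dist 0
    have h5 : dist (ω 0) (ω₀ 0) ≤ dist ω ω₀ := ContinuousMap.dist_apply_le_dist 0
    have h6 : tcore (ω₀, s₀) = ω₀ 0 := apply_eq h _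
    rw [h6]
    calc dist (tcore (ω, s)) (ω₀ 0)
        ≤ dist (tcore (ω, s)) (ω 0) + dist (ω 0) (ω₀ 0) := dist_triangle _ _ _
      _ ≤ (dist ω ω₀ + 0 + dist ω ω₀) + dist ω ω₀ := by
          refine add_le_add (h1.trans (h2.trans ?_)) h5
          rw [h3]
          exact add_le_add (add_le_add le_rfl le_rfl) h4
      _ < ε := by linarith
  · have hu : ContinuousAt (fun x : C(I, B) × I => uval x.1 x.2) (ω₀, s₀) := by
      rw [ContinuousAt, tendsto_subtype_rng]
      exact continuousAt_const.min
        (((continuous_subtype_val.comp continuous_snd).continuousAt).div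
          ((continuous_cfun.comp continuous_fst).continuousAt) h)
    exact (ContinuousEval.continuous_eval.continuousAt).comp
      (continuous_fst.continuousAt.prodMk hu)

/-- The uncurried reparametrized-path map, as a continuous map. -/
def tmap : C(C(I, B) × I, B) := ⟨tcore, continuous_tcore⟩

/-- `tilde ω` is `ω` reparametrized to traverse `ω` on `[0, cfun ω]`. -/
def tilde : C(C(I, B), C(I, B)) := tmap.curry

lemma tilde_apply (ω : C(I, B)) (s : I) : tilde ω s = ω (uval ω s) := rfl

lemma tilde_zero (ω : C(I, B)) : tilde ω 0 = ω 0 := by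
  rw [tilde_apply]
  congr 1
  ext
  show min 1 (((0 : I) : ℝ) / cfun ω) = ((0 : I) : ℝ)
  norm_num

/-- The time-rescaling map `t ↦ t * cfun ω`. -/
def sval : C(I, B) × I → I := fun x =>
  ⟨(x.2 : ℝ) * cfun x.1, mul_nonneg x.2.2.1 (cfun_nonneg _),
    mul_le_one₀ x.2.2.2 (cfun_nonneg _) (cfun_le_one _)⟩

lemma continuous_sval : Continuous (sval (B := B)) :=
  ((continuous_subtype_val.comp continuous_snd).mul
    (continuous_cfun.comp continuous_fst)).subtype_mk _

def smap : C(C(I, B), C(I, I)) := ContinuousMap.curry ⟨sval, continuous_sval⟩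

lemma smap_coe (ω : C(I, B)) (t : I) : ((smap ω t : I) : ℝ) = (t : ℝ) * cfun ω := rfl

lemma smap_zero (ω : C(I, B)) : smap ω 0 = 0 := by
  ext; show ((0 : I) : ℝ) * cfun ω = ((0 : I) : ℝ); norm_num


section Equivariance

variable {G : Type*} [Group G] [MulAction G B] [ContinuousConstSMul G B]

lemma dist_smul_cm (hd : ∀ (g : G) (x y : B), dist (g • x) (g • y) = dist x y)
    (g : G) (f h : C(I, B)) : dist (g • f) (g • h) = dist f h := by
  have key : ∀ (g' : G) (f' h' : C(I, B)), dist (g' • f') (g' • h') ≤ dist f' h' := by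
    intro g' f' h'
    refine (ContinuousMap.dist_le dist_nonneg).2 fun x => ?_
    rw [ContinuousMap.smul_apply, ContinuousMap.smul_apply, hd]
    exact ContinuousMap.dist_apply_le_dist x
  refine le_antisymm (key g f h) ?_
  calc dist f h = dist (g⁻¹ • (g • f)) (g⁻¹ • (g • h)) := by rw [inv_smul_smul, inv_smul_smul]
    _ ≤ dist (g • f) (g • h) := key g⁻¹ _ _

lemma cfun_smul (hd : ∀ (g : G) (x y : B), dist (g • x) (g • y) = dist x y)
    (g : G) (ω : C(I, B)) : cfun (g • ω) = cfun ω := by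
  unfold cfun
  congr 1
  have hc : ContinuousMap.const I ((g • ω) 0) = g • ContinuousMap.const I (ω 0) := by
    ext x; simp [ContinuousMap.smul_apply]
  rw [hc, dist_smul_cm hd]

lemma uval_smul (hd : ∀ (g : G) (x y : B), dist (g • x) (g • y) = dist x y)
    (g : G) (ω : C(I, B)) (s : I) : uval (g • ω) s = uval ω s := by
  ext
  show min 1 ((s : ℝ) / cfun (g • ω)) = min 1 ((s : ℝ) / cfun ω)
  rw [cfun_smul hd]

lemma tilde_smul (hd : ∀ (g : G) (x y : B), dist (g • x) (g • y) = dist x y)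
    (g : G) (ω : C(I, B)) : tilde (g • ω) = g • tilde ω := by
  ext s
  rw [ContinuousMap.smul_apply, tilde_apply, tilde_apply, uval_smul hd,
    ContinuousMap.smul_apply]

lemma smap_smul (hd : ∀ (g : G) (x y : B), dist (g • x) (g • y) = dist x y)
    (g : G) (ω : C(I, B)) : smap (g • ω) = smap ω := by
  ext t
  show ((t : ℝ)) * cfun (g • ω) = (t : ℝ) * cfun ω
  rw [cfun_smul hd]

end Equivariance

end RegLift

end RegLiftAux


/-- The diagonal `G`-action on the space `Ω_p = {(e,w) ∈ E × C(I,B) : p e = w 0}`. -/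
def omegaSmul {G E B : Type*} [Group G] [TopologicalSpace E] [TopologicalSpace B]
    [MulAction G E] [MulAction G B] [ContinuousConstSMul G E] [ContinuousConstSMul G B]
    (p : E → B) (hpe : ∀ (g : G) (e : E), p (g • e) = g • p e) (g : G)
    (q : {q : E × C(I, B) // p q.1 = q.2 0}) : {q : E × C(I, B) // p q.1 = q.2 0} :=
  ⟨(g • q.1.1, g • q.1.2), by
    show p (g • q.1.1) = g • q.1.2 0
    rw [hpe, q.2]⟩

/-- Equivariant Hurewicz regularity: if `B` carries a `G`-invariant metric and the equivariant
map `p : E → B` admits a `G`-lifting function, then `p` admits a *regular* `G`-lifting function,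
i.e. one sending the pair `(e, constant path at p e)` to the constant path at `e`. -/
theorem regular_g_lifting_function_of_g_lifting_function
    {G E B : Type*} [Group G] [TopologicalSpace E] [MetricSpace B]
    [MulAction G E] [MulAction G B] [ContinuousConstSMul G E] [ContinuousConstSMul G B]
    (hd : ∀ (g : G) (x y : B), dist (g • x) (g • y) = dist x y)
    (p : E → B) (hp : Continuous p) (hpe : ∀ (g : G) (e : E), p (g • e) = g • p e)
    (hlift : ∃ lam : {q : E × C(I, B) // p q.1 = q.2 0} → C(I, E),
      Continuous lam ∧
      (∀ (g : G) (q : {q : E × C(I, B) // p q.1 = q.2 0}),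
        lam (omegaSmul p hpe g q) = g • lam q) ∧
      (∀ q : {q : E × C(I, B) // p q.1 = q.2 0}, lam q 0 = q.1.1) ∧
      (∀ (q : {q : E × C(I, B) // p q.1 = q.2 0}) (t : I), p (lam q t) = q.1.2 t)) :
    ∃ lam : {q : E × C(I, B) // p q.1 = q.2 0} → C(I, E),
      Continuous lam ∧
      (∀ (g : G) (q : {q : E × C(I, B) // p q.1 = q.2 0}),
        lam (omegaSmul p hpe g q) = g • lam q) ∧
      (∀ q : {q : E × C(I, B) // p q.1 = q.2 0}, lam q 0 = q.1.1) ∧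
      (∀ (q : {q : E × C(I, B) // p q.1 = q.2 0}) (t : I), p (lam q t) = q.1.2 t) ∧
      (∀ e : E, lam ⟨(e, ContinuousMap.const I (p e)), rfl⟩ = ContinuousMap.const I e) := by
  classical
  obtain ⟨lam, hcont, hequiv, h0, hproj⟩ := hlift
  -- the reparametrization map on Ω
  let Φ : {q : E × C(I, B) // p q.1 = q.2 0} → {q : E × C(I, B) // p q.1 = q.2 0} :=
    fun q => ⟨(q.1.1, RegLift.tilde q.1.2), q.2.trans (RegLift.tilde_zero q.1.2).symm⟩
  have hΦ : Continuous Φ :=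
    ((continuous_subtype_val.fst).prodMk
      ((map_continuous RegLift.tilde).comp continuous_subtype_val.snd)).subtype_mk _
  -- the new lifting function, uncurried
  have hF : Continuous (fun x : {q : E × C(I, B) // p q.1 = q.2 0} × I =>
      lam (Φ x.1) (RegLift.smap x.1.1.2 x.2)) := by
    refine ContinuousEval.continuous_eval.comp (Continuous.prodMk ?_ ?_)
    · exact hcont.comp (hΦ.comp continuous_fst)
    · exact ContinuousEval.continuous_eval.comp
        (((map_continuous RegLift.smap).comp (continuous_subtype_val.snd.comp continuous_fst)).prodMk
          continuous_snd)
  set lam' : {q : E × C(I, B) // p q.1 = q.2 0} → C(I, E) :=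
    ⇑(ContinuousMap.curry ⟨_, hF⟩) with hlam'
  have hlam'app : ∀ q t, lam' q t = lam (Φ q) (RegLift.smap q.1.2 t) := fun q t => rfl
  refine ⟨lam', (ContinuousMap.curry ⟨_, hF⟩).continuous, ?_, ?_, ?_, ?_⟩
  · -- equivariance
    intro g q
    ext t
    rw [ContinuousMap.smul_apply, hlam'app, hlam'app]
    have hΦs : Φ (omegaSmul p hpe g q) = omegaSmul p hpe g (Φ q) := by
      apply Subtype.ext
      show ((g • q.1.1, RegLift.tilde (g • q.1.2)) : E × C(I, B)) = (g • q.1.1, g • RegLift.tilde q.1.2)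
      rw [RegLift.tilde_smul hd]
    rw [hΦs, hequiv g (Φ q), ContinuousMap.smul_apply]
    congr 2
    show RegLift.smap ((omegaSmul p hpe g q).1.2) t = RegLift.smap q.1.2 t
    have : (omegaSmul p hpe g q).1.2 = g • q.1.2 := rfl
    rw [this, RegLift.smap_smul hd]
  · -- starts at e
    intro q
    rw [hlam'app, RegLift.smap_zero, h0]
  · -- lifts the path
    intro q t
    rw [hlam'app, hproj]
    show RegLift.tilde q.1.2 (RegLift.smap q.1.2 t) = q.1.2 t
    rw [RegLift.tilde_apply]
    by_cases hc : RegLift.cfun q.1.2 = 0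
    · rw [RegLift.apply_eq hc, RegLift.apply_eq hc t]
    · congr 1
      ext
      show min 1 (((RegLift.smap q.1.2 t : I) : ℝ) / RegLift.cfun q.1.2) = (t : ℝ)
      rw [RegLift.smap_coe, mul_div_cancel_right₀ _ hc]
      exact min_eq_right t.2.2
  · -- regularity
    intro e
    ext t
    rw [hlam'app]
    have hc : RegLift.cfun (ContinuousMap.const I (p e)) = 0 := by
      simp [RegLift.cfun]
    have hs : RegLift.smap (ContinuousMap.const I (p e)) t = 0 := by
      ext
      show (t : ℝ) * RegLift.cfun (ContinuousMap.const I (p e)) = ((0 : I) : ℝ)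
      rw [hc, mul_zero]; norm_num
    show lam (Φ ⟨(e, ContinuousMap.const I (p e)), rfl⟩) (RegLift.smap (ContinuousMap.const I (p e)) t) = e
    rw [hs, h0]
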